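/- (Transport error bound, coupling form) Fix domains i and j and suppose D_j : 𝒵 × 𝒩_j → 𝒳_j is γ_j-Lipschitz. Define Q_{X_{i→j}} as the pushforward of P_{X_i} ⊗ P_{N_j} under (x, n) ↦ D_j(π^Z(E_i(x)), n). Then for every coupling γ₁ of E_i # P_{X_i} and P_Z ⊗ P_{N_i} (measures on 𝒵 × 𝒩_i) and every coupling γ₂ of P_Z ⊗ P_{N_j} and E_j # P_{X_j} (measures on 𝒵 × 𝒩_j), there exists a coupling π of Q_{X_{i→j}} and P_{X_j} such that ∫ d_j(x, y) dπ(x, y) ≤ γ_j ∫ d̃_i(u, v) dγ₁(u, v) + γ_j ∫ d̃_j(u, v) dγ₂(u, v) + ∫ d_j(x, D_j(E_j(x))) dP_{X_j}(x). -/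

import Mathlib

open MeasureTheory ProbabilityTheory

/-- Pushing forward a composition-product along the comap function recovers the
composition-product of the pushforward with the original kernel. -/
lemma map_compProd_comap {α β δ : Type*} [MeasurableSpace α] [MeasurableSpace β]
    [MeasurableSpace δ] (μ : Measure α) [SFinite μ] {f : α → β} (hf : Measurable f)
    (κ : Kernel β δ) [IsSFiniteKernel κ] :
    (μ ⊗ₘ (κ.comap f hf)).map (fun p : α × δ => (f p.1, p.2)) = (μ.map f) ⊗ₘ κ := by
  have hm : Measurable (fun p : α × δ => (f p.1, p.2)) :=
    (hf.comp measurable_fst).prodMk measurable_snd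
  ext s hs
  rw [Measure.map_apply hm hs, Measure.compProd_apply (hm hs), Measure.compProd_apply hs,
    lintegral_map (Kernel.measurable_kernel_prodMk_left hs) hf]
  simp only [Kernel.comap_apply]
  rfl

theorem transport_error_bound
    {Xi Xj Z Ni Nj : Type*}
    [MetricSpace Xi] [CompleteSpace Xi] [TopologicalSpace.SeparableSpace Xi]
    [MeasurableSpace Xi] [BorelSpace Xi]
    [MetricSpace Xj] [CompleteSpace Xj] [TopologicalSpace.SeparableSpace Xj]
    [MeasurableSpace Xj] [BorelSpace Xj]
    [MetricSpace Z] [CompleteSpace Z] [TopologicalSpace.SeparableSpace Z]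
    [MeasurableSpace Z] [BorelSpace Z]
    [MetricSpace Ni] [CompleteSpace Ni] [TopologicalSpace.SeparableSpace Ni]
    [MeasurableSpace Ni] [BorelSpace Ni]
    [MetricSpace Nj] [CompleteSpace Nj] [TopologicalSpace.SeparableSpace Nj]
    [MeasurableSpace Nj] [BorelSpace Nj]
    (PXi : Measure Xi) [IsProbabilityMeasure PXi]
    (PXj : Measure Xj) [IsProbabilityMeasure PXj]
    (PZ : Measure Z) [IsProbabilityMeasure PZ]
    (PNi : Measure Ni) [IsProbabilityMeasure PNi]
    (PNj : Measure Nj) [IsProbabilityMeasure PNj]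
    (Ei : Xi → Z × Ni) (Ej : Xj → Z × Nj) (Dj : Z × Nj → Xj)
    (hEi : Measurable Ei) (hEj : Measurable Ej) (hDj : Measurable Dj)
    (γj : NNReal)
    (hLip : ∀ u v : Z × Nj,
      edist (Dj u) (Dj v) ≤ (γj : ENNReal) * (edist u.1 v.1 + edist u.2 v.2))
    (γ₁ : Measure ((Z × Ni) × (Z × Ni))) [IsProbabilityMeasure γ₁]
    (hγ₁fst : γ₁.map Prod.fst = PXi.map Ei)
    (hγ₁snd : γ₁.map Prod.snd = PZ.prod PNi)
    (γ₂ : Measure ((Z × Nj) × (Z × Nj))) [IsProbabilityMeasure γ₂]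
    (hγ₂fst : γ₂.map Prod.fst = PZ.prod PNj)
    (hγ₂snd : γ₂.map Prod.snd = PXj.map Ej) :
    ∃ π : Measure (Xj × Xj), IsProbabilityMeasure π ∧
      π.map Prod.fst = Measure.map (fun p : Xi × Nj => Dj ((Ei p.1).1, p.2)) (PXi.prod PNj) ∧
      π.map Prod.snd = PXj ∧
      ∫⁻ p, edist p.1 p.2 ∂π ≤
        (γj : ENNReal) * (∫⁻ p, (edist p.1.1 p.2.1 + edist p.1.2 p.2.2) ∂γ₁)
        + (γj : ENNReal) * (∫⁻ p, (edist p.1.1 p.2.1 + edist p.1.2 p.2.2) ∂γ₂)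
        + ∫⁻ x, edist x (Dj (Ej x)) ∂PXj := by
  classical
  haveI : Nonempty (Z × Nj) := Measure.nonempty_of_neZero (PZ.prod PNj)
  haveI : Nonempty Xj := Measure.nonempty_of_neZero PXj
  -- the reconstruction coupling in domain j
  set ρ : Measure ((Z × Nj) × Xj) := PXj.map (fun y => (Ej y, y)) with hρdef
  haveI : IsProbabilityMeasure ρ :=
    Measure.isProbabilityMeasure_map (hEj.prodMk measurable_id).aemeasurable
  -- the map extracting (v.1, n) from ((u,v),n)
  have hf : Measurable (fun p : ((Z × Ni) × (Z × Ni)) × Nj => ((p.1.2.1, p.2) : Z × Nj)) :=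
    measurable_fst.snd.fst.prodMk measurable_snd
  set μ₁ : Measure (((Z × Ni) × (Z × Ni)) × Nj) := γ₁.prod PNj with hμ₁def
  haveI : IsProbabilityMeasure μ₁ := by rw [hμ₁def]; infer_instance
  set μ₂ : Measure ((((Z × Ni) × (Z × Ni)) × Nj) × (Z × Nj)) :=
    μ₁ ⊗ₘ (γ₂.condKernel.comap _ hf) with hμ₂def
  haveI : IsProbabilityMeasure μ₂ := by rw [hμ₂def]; infer_instance
  set μ₃ : Measure (((((Z × Ni) × (Z × Ni)) × Nj) × (Z × Nj)) × Xj) :=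
    μ₂ ⊗ₘ (ρ.condKernel.comap Prod.snd measurable_snd) with hμ₃def
  haveI : IsProbabilityMeasure μ₃ := by rw [hμ₃def]; infer_instance
  -- marginals of the big measure
  have hm32 : μ₃.map Prod.fst = μ₂ := by rw [hμ₃def]; exact Measure.fst_compProd μ₂ _
  have hm21 : μ₂.map Prod.fst = μ₁ := by rw [hμ₂def]; exact Measure.fst_compProd μ₁ _
  have hm1γ : μ₁.map Prod.fst = γ₁ := by rw [hμ₁def]; exact Measure.fst_prod
  -- the (v.1, n) marginal of μ₁ is PZ ⊗ PNj
  have hμ₁f : μ₁.map (fun p : ((Z × Ni) × (Z × Ni)) × Nj => ((p.1.2.1, p.2) : Z × Nj))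
      = PZ.prod PNj := by
    have h1 : γ₁.map (fun s : (Z × Ni) × (Z × Ni) => s.2.1) = PZ := by
      have h2 : γ₁.map ((Prod.fst : Z × Ni → Z) ∘ (Prod.snd : (Z × Ni) × (Z × Ni) → Z × Ni))
          = PZ := by
        rw [← Measure.map_map measurable_fst measurable_snd, hγ₁snd]
        exact Measure.fst_prod
      exact h2
    have h3 : μ₁.map (Prod.map (fun s : (Z × Ni) × (Z × Ni) => s.2.1) (id : Nj → Nj))
        = PZ.prod PNj := by
      rw [hμ₁def, ← Measure.map_prod_map _ _ measurable_snd.fst measurable_id, h1,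
        Measure.map_id]
    exact h3
  -- the ((v.1, n), w) marginal of μ₂ is γ₂
  have hγ₂dis : (PZ.prod PNj) ⊗ₘ γ₂.condKernel = γ₂ := by
    have h := γ₂.disintegrate γ₂.condKernel
    rwa [show γ₂.fst = PZ.prod PNj from hγ₂fst] at h
  have hμ₂γ₂ : μ₂.map (fun p : (((Z × Ni) × (Z × Ni)) × Nj) × (Z × Nj) =>
      (((p.1.1.2.1, p.1.2) : Z × Nj), p.2)) = γ₂ := by
    have h := map_compProd_comap μ₁ hf γ₂.condKernel
    rw [hμ₁f, hγ₂dis] at h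
    exact h
  have hg : Measurable (fun p : (((Z × Ni) × (Z × Ni)) × Nj) × (Z × Nj) =>
      (((p.1.1.2.1, p.1.2) : Z × Nj), p.2)) :=
    (hf.comp measurable_fst).prodMk measurable_snd
  -- the w marginal of μ₂ is Ej # PXj
  have hμ₂snd : μ₂.map Prod.snd = PXj.map Ej := by
    have h : μ₂.map ((Prod.snd : (Z × Nj) × (Z × Nj) → Z × Nj) ∘
        (fun p : (((Z × Ni) × (Z × Ni)) × Nj) × (Z × Nj) =>
          (((p.1.1.2.1, p.1.2) : Z × Nj), p.2))) = PXj.map Ej := by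
      rw [← Measure.map_map measurable_snd hg, hμ₂γ₂, hγ₂snd]
    exact h
  -- the (w, y) marginal of μ₃ is ρ
  have hρfst : ρ.fst = PXj.map Ej := Measure.fst_map_prodMk measurable_id
  have hμ₃ρ : μ₃.map (fun q : ((((Z × Ni) × (Z × Ni)) × Nj) × (Z × Nj)) × Xj =>
      (q.1.2, q.2)) = ρ := by
    have h := map_compProd_comap μ₂
      (measurable_snd : Measurable (Prod.snd : (((Z × Ni) × (Z × Ni)) × Nj) × (Z × Nj) → Z × Nj))
      ρ.condKernel
    rw [hμ₂snd, ← hρfst] at h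
    rw [hμ₃def]
    rw [h]
    exact ρ.disintegrate ρ.condKernel
  -- the (u, v) marginal of μ₃ is γ₁
  have hμ₃γ₁ : μ₃.map (fun q : ((((Z × Ni) × (Z × Ni)) × Nj) × (Z × Nj)) × Xj =>
      q.1.1.1) = γ₁ := by
    calc μ₃.map (fun q : ((((Z × Ni) × (Z × Ni)) × Nj) × (Z × Nj)) × Xj => q.1.1.1)
        = (μ₃.map Prod.fst).map (fun r : (((Z × Ni) × (Z × Ni)) × Nj) × (Z × Nj) => r.1.1) :=
          (Measure.map_map measurable_fst.fst measurable_fst).symm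
      _ = μ₂.map (fun r : (((Z × Ni) × (Z × Ni)) × Nj) × (Z × Nj) => r.1.1) := by rw [hm32]
      _ = (μ₂.map Prod.fst).map Prod.fst :=
          (Measure.map_map measurable_fst measurable_fst).symm
      _ = μ₁.map Prod.fst := by rw [hm21]
      _ = γ₁ := hm1γ
  -- the ((v.1, n), w) marginal of μ₃ is γ₂
  have hμ₃γ₂ : μ₃.map ((fun p : (((Z × Ni) × (Z × Ni)) × Nj) × (Z × Nj) =>
      (((p.1.1.2.1, p.1.2) : Z × Nj), p.2)) ∘ Prod.fst) = γ₂ := by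
    rw [← Measure.map_map hg measurable_fst, hm32, hμ₂γ₂]
  -- the coupling
  set F : (((((Z × Ni) × (Z × Ni)) × Nj) × (Z × Nj)) × Xj) → Xj × Xj :=
    fun q => (Dj (q.1.1.1.1.1, q.1.1.2), q.2) with hFdef
  have hFm : Measurable F :=
    (hDj.comp ((measurable_fst.fst.fst.fst.fst).prodMk measurable_fst.fst.snd)).prodMk
      measurable_snd
  refine ⟨μ₃.map F, Measure.isProbabilityMeasure_map hFm.aemeasurable, ?_, ?_, ?_⟩
  · -- first marginal
    rw [Measure.map_map measurable_fst hFm]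
    have h1 : μ₃.map (fun q : ((((Z × Ni) × (Z × Ni)) × Nj) × (Z × Nj)) × Xj =>
        ((q.1.1.1.1, q.1.1.2) : (Z × Ni) × Nj)) = (PXi.map Ei).prod PNj := by
      have h2 : μ₁.map (Prod.map (Prod.fst : (Z × Ni) × (Z × Ni) → Z × Ni) (id : Nj → Nj))
          = (PXi.map Ei).prod PNj := by
        rw [hμ₁def, ← Measure.map_prod_map _ _ measurable_fst measurable_id, hγ₁fst,
          Measure.map_id]
      calc μ₃.map (fun q : ((((Z × Ni) × (Z × Ni)) × Nj) × (Z × Nj)) × Xj =>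
            ((q.1.1.1.1, q.1.1.2) : (Z × Ni) × Nj))
          = (μ₃.map Prod.fst).map
              (fun r : (((Z × Ni) × (Z × Ni)) × Nj) × (Z × Nj) =>
                ((r.1.1.1, r.1.2) : (Z × Ni) × Nj)) :=
            (Measure.map_map (measurable_fst.fst.fst.prodMk measurable_fst.snd)
              measurable_fst).symm
        _ = μ₂.map (fun r : (((Z × Ni) × (Z × Ni)) × Nj) × (Z × Nj) =>
              ((r.1.1.1, r.1.2) : (Z × Ni) × Nj)) := by rw [hm32]
        _ = (μ₂.map Prod.fst).map (fun r : ((Z × Ni) × (Z × Ni)) × Nj =>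
              ((r.1.1, r.2) : (Z × Ni) × Nj)) :=
            (Measure.map_map (measurable_fst.fst.prodMk measurable_snd) measurable_fst).symm
        _ = μ₁.map (fun r : ((Z × Ni) × (Z × Ni)) × Nj => ((r.1.1, r.2) : (Z × Ni) × Nj)) := by
            rw [hm21]
        _ = (PXi.map Ei).prod PNj := h2
    have hDj1 : Measurable (fun a : (Z × Ni) × Nj => Dj (a.1.1, a.2)) :=
      hDj.comp (measurable_fst.fst.prodMk measurable_snd)
    have hg0 : Measurable (fun q : ((((Z × Ni) × (Z × Ni)) × Nj) × (Z × Nj)) × Xj =>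
        ((q.1.1.1.1, q.1.1.2) : (Z × Ni) × Nj)) :=
      (measurable_fst.fst.fst.fst).prodMk measurable_fst.fst.snd
    have h5 : (PXi.map Ei).prod PNj = (PXi.prod PNj).map (Prod.map Ei (id : Nj → Nj)) := by
      rw [← Measure.map_prod_map _ _ hEi measurable_id, Measure.map_id]
    calc μ₃.map (Prod.fst ∘ F)
        = (μ₃.map (fun q : ((((Z × Ni) × (Z × Ni)) × Nj) × (Z × Nj)) × Xj =>
            ((q.1.1.1.1, q.1.1.2) : (Z × Ni) × Nj))).map
              (fun a : (Z × Ni) × Nj => Dj (a.1.1, a.2)) :=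
          (Measure.map_map hDj1 hg0).symm
      _ = ((PXi.map Ei).prod PNj).map (fun a : (Z × Ni) × Nj => Dj (a.1.1, a.2)) := by rw [h1]
      _ = ((PXi.prod PNj).map (Prod.map Ei (id : Nj → Nj))).map
            (fun a : (Z × Ni) × Nj => Dj (a.1.1, a.2)) := by rw [h5]
      _ = (PXi.prod PNj).map (fun p : Xi × Nj => Dj ((Ei p.1).1, p.2)) :=
          Measure.map_map hDj1 (hEi.prodMap measurable_id)
  · -- second marginal
    rw [Measure.map_map measurable_snd hFm]
    have hG3 : Measurable (fun q : ((((Z × Ni) × (Z × Ni)) × Nj) × (Z × Nj)) × Xj =>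
        ((q.1.2, q.2) : (Z × Nj) × Xj)) := measurable_fst.snd.prodMk measurable_snd
    calc μ₃.map (Prod.snd ∘ F)
        = (μ₃.map (fun q : ((((Z × Ni) × (Z × Ni)) × Nj) × (Z × Nj)) × Xj =>
            ((q.1.2, q.2) : (Z × Nj) × Xj))).map Prod.snd :=
          (Measure.map_map measurable_snd hG3).symm
      _ = ρ.map Prod.snd := by rw [hμ₃ρ]
      _ = PXj.map ((Prod.snd : (Z × Nj) × Xj → Xj) ∘ (fun y => (Ej y, y))) := by
          rw [hρdef]; exact Measure.map_map measurable_snd (hEj.prodMk measurable_id)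
      _ = PXj := Measure.map_id
  · -- cost bound
    have hpt : ∀ q : ((((Z × Ni) × (Z × Ni)) × Nj) × (Z × Nj)) × Xj,
        edist (F q).1 (F q).2 ≤
          (γj : ENNReal) * edist q.1.1.1.1.1 q.1.1.1.2.1
          + (γj : ENNReal) * (edist q.1.1.1.2.1 q.1.2.1 + edist q.1.1.2 q.1.2.2)
          + edist (Dj q.1.2) q.2 := by
      intro q
      have tri : edist (F q).1 (F q).2 ≤
          edist (Dj (q.1.1.1.1.1, q.1.1.2)) (Dj (q.1.1.1.2.1, q.1.1.2))
          + edist (Dj (q.1.1.1.2.1, q.1.1.2)) (Dj q.1.2) + edist (Dj q.1.2) q.2 :=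
        edist_triangle4 _ _ _ _
      refine tri.trans (add_le_add (add_le_add ?_ ?_) le_rfl)
      · have h := hLip (q.1.1.1.1.1, q.1.1.2) (q.1.1.1.2.1, q.1.1.2)
        simpa using h
      · exact hLip (q.1.1.1.2.1, q.1.1.2) q.1.2
    have hmc1 : Measurable (fun q : ((((Z × Ni) × (Z × Ni)) × Nj) × (Z × Nj)) × Xj =>
        (γj : ENNReal) * edist q.1.1.1.1.1 q.1.1.1.2.1) :=
      (measurable_fst.fst.fst.fst.fst.edist measurable_fst.fst.fst.snd.fst).const_mul _
    have hmc2 : Measurable (fun q : ((((Z × Ni) × (Z × Ni)) × Nj) × (Z × Nj)) × Xj =>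
        (γj : ENNReal) * (edist q.1.1.1.2.1 q.1.2.1 + edist q.1.1.2 q.1.2.2)) :=
      (((measurable_fst.fst.fst.snd.fst.edist measurable_fst.snd.fst)).add
        ((measurable_fst.fst.snd.edist measurable_fst.snd.snd))).const_mul _
    have hmc3 : Measurable (fun q : ((((Z × Ni) × (Z × Ni)) × Nj) × (Z × Nj)) × Xj =>
        edist (Dj q.1.2) q.2) :=
      (hDj.comp measurable_fst.snd).edist measurable_snd
    have key : ∫⁻ p, edist p.1 p.2 ∂(μ₃.map F) ≤
        (∫⁻ q, (γj : ENNReal) * edist q.1.1.1.1.1 q.1.1.1.2.1 ∂μ₃)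
        + (∫⁻ q, (γj : ENNReal) * (edist q.1.1.1.2.1 q.1.2.1 + edist q.1.1.2 q.1.2.2) ∂μ₃)
        + ∫⁻ q, edist (Dj q.1.2) q.2 ∂μ₃ := by
      rw [lintegral_map (measurable_fst.edist measurable_snd) hFm]
      calc ∫⁻ q, edist (F q).1 (F q).2 ∂μ₃
          ≤ ∫⁻ q, ((γj : ENNReal) * edist q.1.1.1.1.1 q.1.1.1.2.1
            + (γj : ENNReal) * (edist q.1.1.1.2.1 q.1.2.1 + edist q.1.1.2 q.1.2.2)
            + edist (Dj q.1.2) q.2) ∂μ₃ := lintegral_mono hpt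
        _ = _ := by
          rw [lintegral_add_left (show Measurable (fun q : ((((Z × Ni) × (Z × Ni)) × Nj) × (Z × Nj)) × Xj =>
              (γj : ENNReal) * edist q.1.1.1.1.1 q.1.1.1.2.1
              + (γj : ENNReal) * (edist q.1.1.1.2.1 q.1.2.1 + edist q.1.1.2 q.1.2.2)) from
              hmc1.add hmc2), lintegral_add_left hmc1]
    -- term 1
    have hG1m : Measurable (fun q : ((((Z × Ni) × (Z × Ni)) × Nj) × (Z × Nj)) × Xj =>
        q.1.1.1) := measurable_fst.fst.fst
    have T1 : (∫⁻ q, (γj : ENNReal) * edist q.1.1.1.1.1 q.1.1.1.2.1 ∂μ₃)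
        ≤ (γj : ENNReal) * ∫⁻ p, (edist p.1.1 p.2.1 + edist p.1.2 p.2.2) ∂γ₁ := by
      rw [lintegral_const_mul _ (measurable_fst.fst.fst.fst.fst.edist
        measurable_fst.fst.fst.snd.fst)]
      refine mul_le_mul_right ?_ _
      have h := lintegral_map (μ := μ₃)
        (f := fun s : (Z × Ni) × (Z × Ni) => edist s.1.1 s.2.1)
        (g := fun q : ((((Z × Ni) × (Z × Ni)) × Nj) × (Z × Nj)) × Xj => q.1.1.1)
        (measurable_fst.fst.edist measurable_snd.fst) hG1m
      rw [hμ₃γ₁] at h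
      rw [← h]
      exact lintegral_mono fun s => le_self_add
    -- term 2
    have T2 : (∫⁻ q, (γj : ENNReal) * (edist q.1.1.1.2.1 q.1.2.1 + edist q.1.1.2 q.1.2.2) ∂μ₃)
        = (γj : ENNReal) * ∫⁻ p, (edist p.1.1 p.2.1 + edist p.1.2 p.2.2) ∂γ₂ := by
      rw [lintegral_const_mul _ (show Measurable (fun q : ((((Z × Ni) × (Z × Ni)) × Nj) × (Z × Nj)) × Xj =>
        edist q.1.1.1.2.1 q.1.2.1 + edist q.1.1.2 q.1.2.2) from
        (measurable_fst.fst.fst.snd.fst.edist measurable_fst.snd.fst).add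
        (measurable_fst.fst.snd.edist measurable_fst.snd.snd))]
      congr 1
      have h := lintegral_map (μ := μ₃)
        (f := fun s : (Z × Nj) × (Z × Nj) => edist s.1.1 s.2.1 + edist s.1.2 s.2.2)
        (g := (fun p : (((Z × Ni) × (Z × Ni)) × Nj) × (Z × Nj) =>
          (((p.1.1.2.1, p.1.2) : Z × Nj), p.2)) ∘ Prod.fst)
        ((measurable_fst.fst.edist measurable_snd.fst).add
          (measurable_fst.snd.edist measurable_snd.snd))
        (hg.comp measurable_fst)
      rw [hμ₃γ₂] at h
      exact h.symm
    -- term 3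
    have T3 : (∫⁻ q, edist (Dj q.1.2) q.2 ∂μ₃) = ∫⁻ x, edist x (Dj (Ej x)) ∂PXj := by
      have h := lintegral_map (μ := μ₃)
        (f := fun s : (Z × Nj) × Xj => edist (Dj s.1) s.2)
        (g := fun q : ((((Z × Ni) × (Z × Ni)) × Nj) × (Z × Nj)) × Xj => (q.1.2, q.2))
        ((hDj.comp measurable_fst).edist measurable_snd)
        (measurable_fst.snd.prodMk measurable_snd)
      rw [hμ₃ρ] at h
      have h1 : (∫⁻ q, edist (Dj q.1.2) q.2 ∂μ₃) = ∫⁻ s, edist (Dj s.1) s.2 ∂ρ := h.symm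
      have h2 : (∫⁻ s, edist (Dj s.1) s.2 ∂ρ) = ∫⁻ y, edist (Dj (Ej y)) y ∂PXj := by
        rw [hρdef]
        exact lintegral_map ((hDj.comp measurable_fst).edist measurable_snd)
          (hEj.prodMk measurable_id)
      rw [h1, h2]
      exact lintegral_congr fun y => edist_comm _ _
    calc ∫⁻ p, edist p.1 p.2 ∂(μ₃.map F) ≤ _ := key
      _ ≤ _ := by rw [T2, T3]; exact add_le_add (add_le_add T1 le_rfl) le_rfl
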